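/- Let a, b : ℕ → ℝ be nonincreasing sequences of nonnegative real numbers such that a is multiplicatively majorized by b. Let f : ℝ → ℝ be a continuous, monotonically increasing function such that the composition x ↦ f(exp(x) − 1) is convex on [0,∞). Then for every n, ∑_{i=1}^n f(a_i) ≤ ∑_{i=1}^n f(b_i). -/

import Mathlib

open Finset

/-- Hardy–Littlewood–Pólya weak majorization: if `x` is weakly majorized by `y`
(both antitone nonnegative) and `g` is convex and monotone on `[0,∞)`, then
`g ∘ x` is weakly majorized by `g ∘ y`. -/
theorem hlp_weak_majorization (g : ℝ → ℝ) (hg : ConvexOn ℝ (Set.Ici 0) g)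
    (hmono : MonotoneOn g (Set.Ici 0)) (x y : ℕ → ℝ)
    (hx : Antitone x) (hy : Antitone y) (hx0 : ∀ i, 0 ≤ x i) (hy0 : ∀ i, 0 ≤ y i)
    (hsum : ∀ n, ∑ i ∈ Finset.range n, x i ≤ ∑ i ∈ Finset.range n, y i) :
    ∀ n, ∑ i ∈ Finset.range n, g (x i) ≤ ∑ i ∈ Finset.range n, g (y i) := by
  classical
  -- slope of g over the interval between x j and y j
  set sl : ℕ → ℝ := fun j =>
    (g (max (x j) (y j)) - g (min (x j) (y j))) / (max (x j) (y j) - min (x j) (y j)) with hsl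
  have mem_min : ∀ j, min (x j) (y j) ∈ Set.Ici (0:ℝ) := fun j => le_min (hx0 j) (hy0 j)
  have mem_max : ∀ j, max (x j) (y j) ∈ Set.Ici (0:ℝ) := fun j => le_max_of_le_left (hx0 j)
  have sl_nonneg : ∀ j, 0 ≤ sl j := by
    intro j
    rcases eq_or_ne (x j) (y j) with h | h
    · simp [hsl, h]
    · have hlt : min (x j) (y j) < max (x j) (y j) := min_lt_max.2 h
      exact div_nonneg (by linarith [hmono (mem_min j) (mem_max j) hlt.le]) (by linarith)
  -- slopes are antitone among indices with distinct pair
  have sl_anti : ∀ j k, j ≤ k → x j ≠ y j → x k ≠ y k → sl k ≤ sl j := by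
    intro j k hjk hj hk
    have hminlt_j : min (x j) (y j) < max (x j) (y j) := min_lt_max.2 hj
    have hminlt_k : min (x k) (y k) < max (x k) (y k) := min_lt_max.2 hk
    have hmin : min (x k) (y k) ≤ min (x j) (y j) := min_le_min (hx hjk) (hy hjk)
    have hmax : max (x k) (y k) ≤ max (x j) (y j) := max_le_max (hx hjk) (hy hjk)
    -- slope(a', b') ≤ slope(a', b) ≤ slope(a, b) with a' ≤ a, b' ≤ b
    have step1 : sl k ≤ (g (max (x j) (y j)) - g (min (x k) (y k))) /
        (max (x j) (y j) - min (x k) (y k)) := by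
      have := hg.secant_mono (mem_min k) (mem_max k) (mem_max j)
        (ne_of_gt hminlt_k) (ne_of_gt (lt_of_lt_of_le hminlt_k hmax)) hmax
      simpa [hsl] using this
    have step2 : (g (max (x j) (y j)) - g (min (x k) (y k))) /
        (max (x j) (y j) - min (x k) (y k)) ≤ sl j := by
      have h1 : min (x k) (y k) < max (x j) (y j) := lt_of_lt_of_le hminlt_k hmax
      have := hg.secant_mono (a := max (x j) (y j)) (mem_max j) (mem_min k) (mem_min j)
        (ne_of_lt h1) (ne_of_lt hminlt_j) hmin
      have h2 : (g (min (x k) (y k)) - g (max (x j) (y j))) /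
          (min (x k) (y k) - max (x j) (y j)) =
          (g (max (x j) (y j)) - g (min (x k) (y k))) /
          (max (x j) (y j) - min (x k) (y k)) := by
        rw [← neg_div_neg_eq]; ring_nf
      have h3 : (g (min (x j) (y j)) - g (max (x j) (y j))) /
          (min (x j) (y j) - max (x j) (y j)) = sl j := by
        rw [hsl, ← neg_div_neg_eq]; ring_nf
      rw [h2, h3] at this
      exact this
    exact step1.trans step2
  -- the subgradient-like sequence
  set t : ℕ → ℝ := fun i =>
    if h : ∃ j, i ≤ j ∧ x j ≠ y j then sl (Nat.find h) else 0 with ht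
  have t_nonneg : ∀ i, 0 ≤ t i := by
    intro i; rw [ht]; dsimp only
    split
    · exact sl_nonneg _
    · exact le_refl 0
  have t_anti : Antitone t := by
    intro i i' hii'
    rw [ht]; dsimp only
    by_cases h' : ∃ j, i' ≤ j ∧ x j ≠ y j
    · have h : ∃ j, i ≤ j ∧ x j ≠ y j := by
        obtain ⟨j, hj1, hj2⟩ := h'
        exact ⟨j, hii'.trans hj1, hj2⟩
      rw [dif_pos h, dif_pos h']
      have hfind : Nat.find h ≤ Nat.find h' := by
        apply Nat.find_le
        obtain ⟨hj1, hj2⟩ := Nat.find_spec h'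
        exact ⟨hii'.trans hj1, hj2⟩
      exact sl_anti _ _ hfind (Nat.find_spec h).2 (Nat.find_spec h').2
    · rw [dif_neg h']
      split
      · exact sl_nonneg _
      · exact le_refl 0
  have t_eq : ∀ i, x i ≠ y i → t i = sl i := by
    intro i hi
    have h : ∃ j, i ≤ j ∧ x j ≠ y j := ⟨i, le_refl i, hi⟩
    rw [ht]; dsimp only; rw [dif_pos h]
    have h1 : Nat.find h ≤ i := Nat.find_le ⟨le_refl i, hi⟩
    have h2 : i ≤ Nat.find h := (Nat.find_spec h).1
    rw [le_antisymm h1 h2]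
  -- key pointwise inequality
  have key : ∀ i, g (x i) - g (y i) ≤ t i * (x i - y i) := by
    intro i
    rcases eq_or_ne (x i) (y i) with h | h
    · simp [h]
    · rw [t_eq i h]
      rcases lt_or_gt_of_ne h with hlt | hlt
      · have hmin : min (x i) (y i) = x i := min_eq_left hlt.le
        have hmax : max (x i) (y i) = y i := max_eq_right hlt.le
        rw [hsl]; dsimp only; rw [hmin, hmax]
        rw [div_mul_eq_mul_div, le_div_iff₀ (by linarith)]
        try ring_nf
        try exact le_refl _
      · have hmin : min (x i) (y i) = y i := min_eq_right hlt.le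
        have hmax : max (x i) (y i) = x i := max_eq_left hlt.le
        rw [hsl]; dsimp only; rw [hmin, hmax]
        rw [div_mul_eq_mul_div, le_div_iff₀ (by linarith)]
        try ring_nf
        try exact le_refl _
  -- Abel summation estimate
  have abel : ∀ n, ∑ i ∈ Finset.range n, t i * (x i - y i) ≤
      t n * (∑ i ∈ Finset.range n, (x i - y i)) := by
    intro n
    induction n with
    | zero => simp
    | succ n ih =>
      rw [Finset.sum_range_succ, Finset.sum_range_succ]
      have hD : (∑ i ∈ Finset.range (n+1), (x i - y i)) ≤ 0 := by
        rw [Finset.sum_sub_distrib]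
        linarith [hsum (n+1)]
      have h1 : ∑ i ∈ Finset.range n, t i * (x i - y i) + t n * (x n - y n) ≤
          t n * (∑ i ∈ Finset.range n, (x i - y i)) + t n * (x n - y n) := by linarith
      have h2 : t n * (∑ i ∈ Finset.range n, (x i - y i)) + t n * (x n - y n) =
          t n * (∑ i ∈ Finset.range (n+1), (x i - y i)) := by
        rw [Finset.sum_range_succ]; ring
      rw [h2] at h1
      refine h1.trans ?_
      rw [← Finset.sum_range_succ]
      exact mul_le_mul_of_nonpos_right (t_anti (Nat.le_succ n)) hD
  intro n
  have hfinal : ∑ i ∈ Finset.range n, (g (x i) - g (y i)) ≤ 0 := by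
    calc ∑ i ∈ Finset.range n, (g (x i) - g (y i))
        ≤ ∑ i ∈ Finset.range n, t i * (x i - y i) :=
          Finset.sum_le_sum (fun i _ => key i)
      _ ≤ t n * (∑ i ∈ Finset.range n, (x i - y i)) := abel n
      _ ≤ 0 := by
          apply mul_nonpos_of_nonneg_of_nonpos (t_nonneg n)
          rw [Finset.sum_sub_distrib]
          linarith [hsum n]
  rw [Finset.sum_sub_distrib] at hfinal
  linarith

/-- Let a, b be nonincreasing nonnegative sequences with a
multiplicatively majorized by b, and f continuous increasing with x ↦ f(exp x − 1)
convex on [0,∞). Then f(a) is weakly majorized by f(b). -/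
theorem stmt_10 (a b : ℕ → ℝ) (ha_mono : Antitone a) (hb_mono : Antitone b)
    (ha : ∀ i, 0 ≤ a i) (hb : ∀ i, 0 ≤ b i)
    (hmaj : ∀ n : ℕ, ∏ i ∈ Finset.range n, (1 + a i) ≤ ∏ i ∈ Finset.range n, (1 + b i))
    (f : ℝ → ℝ) (hf_cont : Continuous f) (hf_mono : Monotone f)
    (hf_conv : ConvexOn ℝ (Set.Ici 0) (fun x => f (Real.exp x - 1))) :
    ∀ n : ℕ, ∑ i ∈ Finset.range n, f (a i) ≤ ∑ i ∈ Finset.range n, f (b i) := by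
  set g : ℝ → ℝ := fun x => f (Real.exp x - 1) with hg
  set x : ℕ → ℝ := fun i => Real.log (1 + a i) with hxdef
  set y : ℕ → ℝ := fun i => Real.log (1 + b i) with hydef
  have hpa : ∀ i, (0:ℝ) < 1 + a i := fun i => by linarith [ha i]
  have hpb : ∀ i, (0:ℝ) < 1 + b i := fun i => by linarith [hb i]
  have hgx : ∀ i, g (x i) = f (a i) := by
    intro i; simp [hg, hxdef, Real.exp_log (hpa i)]
  have hgy : ∀ i, g (y i) = f (b i) := by
    intro i; simp [hg, hydef, Real.exp_log (hpb i)]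
  have hgmono : MonotoneOn g (Set.Ici 0) := by
    intro u _ v _ huv
    exact hf_mono (by linarith [Real.exp_le_exp.2 huv])
  have hxanti : Antitone x := fun i j hij =>
    Real.log_le_log (hpa j) (by linarith [ha_mono hij])
  have hyanti : Antitone y := fun i j hij =>
    Real.log_le_log (hpb j) (by linarith [hb_mono hij])
  have hx0 : ∀ i, 0 ≤ x i := fun i => Real.log_nonneg (by linarith [ha i])
  have hy0 : ∀ i, 0 ≤ y i := fun i => Real.log_nonneg (by linarith [hb i])
  have hsum : ∀ n, ∑ i ∈ Finset.range n, x i ≤ ∑ i ∈ Finset.range n, y i := by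
    intro n
    have h1 : ∑ i ∈ Finset.range n, x i = Real.log (∏ i ∈ Finset.range n, (1 + a i)) :=
      (Real.log_prod (fun i _ => ne_of_gt (hpa i))).symm
    have h2 : ∑ i ∈ Finset.range n, y i = Real.log (∏ i ∈ Finset.range n, (1 + b i)) :=
      (Real.log_prod (fun i _ => ne_of_gt (hpb i))).symm
    rw [h1, h2]
    exact Real.log_le_log (Finset.prod_pos (fun i _ => hpa i)) (hmaj n)
  intro n
  have := hlp_weak_majorization g hf_conv hgmono x y hxanti hyanti hx0 hy0 hsum n
  simpa [hgx, hgy] using this
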